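/- Let $p, q \in (1,\infty)$ with $q > p/(p-1)$. If a Banach space $X$ has the $p$-alternating Banach-Saks property and property $\mathcal Q_q$, then $X$ is reflexive. -/

import Mathlib

open Filter

/-- Kalton's interlaced distance on finite subsets of `ℕ`. -/
noncomputable def dK (A B : Finset ℕ) : ℕ :=
  sSup {d : ℕ | ∃ a b : ℕ,
    d = (((A ∩ Finset.Icc a b).card : ℤ) - ((B ∩ Finset.Icc a b).card : ℤ)).natAbs}

lemma dK_bound {A B : Finset ℕ} (h : dK A B ≤ 1) (a b : ℕ) :
    (((A ∩ Finset.Icc a b).card : ℤ) - ((B ∩ Finset.Icc a b).card : ℤ)).natAbs ≤ 1 := by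
  have hbdd : BddAbove {d : ℕ | ∃ a b : ℕ,
      d = (((A ∩ Finset.Icc a b).card : ℤ) - ((B ∩ Finset.Icc a b).card : ℤ)).natAbs} := by
    refine ⟨A.card + B.card, ?_⟩
    rintro d ⟨a', b', rfl⟩
    have h1 : (A ∩ Finset.Icc a' b').card ≤ A.card := Finset.card_le_card Finset.inter_subset_left
    have h2 : (B ∩ Finset.Icc a' b').card ≤ B.card := Finset.card_le_card Finset.inter_subset_left
    omega
  have hmem : (((A ∩ Finset.Icc a b).card : ℤ) - ((B ∩ Finset.Icc a b).card : ℤ)).natAbs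
      ∈ {d : ℕ | ∃ a b : ℕ,
      d = (((A ∩ Finset.Icc a b).card : ℤ) - ((B ∩ Finset.Icc a b).card : ℤ)).natAbs} :=
    ⟨a, b, rfl⟩
  exact le_trans (le_csSup hbdd hmem) h

/-- prefix counts -/
def cnt (A : Finset ℕ) (t : ℕ) : ℤ := ((A ∩ Finset.Iic t).card : ℤ)

lemma Iic_eq_Icc_zero (t : ℕ) : Finset.Iic t = Finset.Icc 0 t := by
  ext a; simp

lemma cnt_interval (A : Finset ℕ) {t u : ℕ} (h : t ≤ u) :
    ((A ∩ Finset.Icc (t+1) u).card : ℤ) = cnt A u - cnt A t := by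
  have he : A ∩ Finset.Iic u = (A ∩ Finset.Iic t) ∪ (A ∩ Finset.Icc (t+1) u) := by
    ext a; simp only [Finset.mem_union, Finset.mem_inter, Finset.mem_Iic, Finset.mem_Icc]
    have : a ≤ u ↔ a ≤ t ∨ (t+1 ≤ a ∧ a ≤ u) := by omega
    tauto
  have hd : Disjoint (A ∩ Finset.Iic t) (A ∩ Finset.Icc (t+1) u) := by
    rw [Finset.disjoint_left]
    intro a ha ha'
    simp only [Finset.mem_inter, Finset.mem_Iic, Finset.mem_Icc] at ha ha'
    omega
  have hc : (A ∩ Finset.Iic u).card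
      = (A ∩ Finset.Iic t).card + (A ∩ Finset.Icc (t+1) u).card := by
    rw [he, Finset.card_union_of_disjoint hd]
  simp only [cnt]
  omega

lemma cnt_diff_le {A B : Finset ℕ} (h : dK A B ≤ 1) (t : ℕ) :
    (cnt A t - cnt B t).natAbs ≤ 1 := by
  have := dK_bound h 0 t
  rw [← Iic_eq_Icc_zero t] at this
  simpa [cnt] using this

/-- WLOG branch: one-sided domination of prefix counts. -/
lemma cnt_wlog {A B : Finset ℕ} (h : dK A B ≤ 1) :
    (∀ t, cnt B t ≤ cnt A t) ∨ (∀ t, cnt A t ≤ cnt B t) := by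
  by_contra hc
  push_neg at hc
  obtain ⟨⟨t₁, h₁⟩, t₂, h₂⟩ := hc
  -- cnt A t₁ < cnt B t₁, cnt B t₂ < cnt A t₂
  have e₁ := cnt_diff_le h t₁
  have e₂ := cnt_diff_le h t₂
  rcases lt_trichotomy t₁ t₂ with hlt | heq | hgt
  · have := dK_bound h (t₁+1) t₂
    rw [cnt_interval A (by omega), cnt_interval B (by omega)] at this
    omega
  · subst heq; omega
  · have := dK_bound h (t₂+1) t₁
    rw [cnt_interval A (by omega), cnt_interval B (by omega)] at this
    omega

lemma cnt_union_disjoint {D E : Finset ℕ} (h : Disjoint D E) (t : ℕ) :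
    cnt (D ∪ E) t = cnt D t + cnt E t := by
  have he : (D ∪ E) ∩ Finset.Iic t = (D ∩ Finset.Iic t) ∪ (E ∩ Finset.Iic t) :=
    Finset.union_inter_distrib_right ..
  have hd : Disjoint (D ∩ Finset.Iic t) (E ∩ Finset.Iic t) :=
    h.mono Finset.inter_subset_left Finset.inter_subset_left
  simp [cnt, he, Finset.card_union_of_disjoint hd]

lemma cnt_sdiff_sub (A B : Finset ℕ) (t : ℕ) :
    cnt (A \ B) t - cnt (B \ A) t = cnt A t - cnt B t := by
  have h1 : cnt A t = cnt (A \ B) t + cnt (A ∩ B) t := by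
    rw [← cnt_union_disjoint (Finset.disjoint_sdiff_inter A B), Finset.sdiff_union_inter]
  have h2 : cnt B t = cnt (B \ A) t + cnt (B ∩ A) t := by
    rw [← cnt_union_disjoint (Finset.disjoint_sdiff_inter B A), Finset.sdiff_union_inter]
  rw [Finset.inter_comm B A] at h2
  omega

lemma alt_mem {A B : Finset ℕ} {n : ℕ} (hn : (A \ B ∪ B \ A).card = n)
    (hd : ∀ t, cnt B t ≤ cnt A t ∧ cnt A t ≤ cnt B t + 1)
    (j : Fin n) :
    (A \ B ∪ B \ A).orderEmbOfFin hn j ∈ A \ B ↔ Even (j : ℕ) := by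
  set D := A \ B with hD
  set E := B \ A with hE
  set U := D ∪ E with hU
  set u := U.orderEmbOfFin hn with hu
  have hDE : Disjoint D E := disjoint_sdiff_sdiff
  have humem : ∀ i : Fin n, u i ∈ U := fun i => Finset.orderEmbOfFin_mem U hn i
  have husurj : ∀ a ∈ U, ∃ i : Fin n, u i = a := by
    intro a ha
    have : a ∈ Set.range u := by rw [hu, Finset.range_orderEmbOfFin]; exact ha
    exact this
  have hUcnt : ∀ j : Fin n, cnt U (u j) = ((j : ℕ) : ℤ) + 1 := by
    intro j
    have he : U ∩ Finset.Iic (u j)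
        = Finset.image u (Finset.univ.filter (fun i : Fin n => i ≤ j)) := by
      ext a
      simp only [Finset.mem_inter, Finset.mem_Iic, Finset.mem_image, Finset.mem_filter,
        Finset.mem_univ, true_and]
      constructor
      · rintro ⟨ha, hle⟩
        obtain ⟨i, rfl⟩ := husurj a ha
        exact ⟨i, u.le_iff_le.mp hle, rfl⟩
      · rintro ⟨i, hij, rfl⟩
        exact ⟨humem i, u.le_iff_le.mpr hij⟩
    have hcard2 : (Finset.univ.filter (fun i : Fin n => i ≤ j)).card = (j : ℕ) + 1 := by
      have : Finset.univ.filter (fun i : Fin n => i ≤ j) = Finset.Iic j := by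
        ext i; simp
      rw [this, Fin.card_Iic]
    rw [cnt, he, Finset.card_image_of_injective _ u.injective, hcard2]
    push_cast; ring
  have hsplit : ∀ j : Fin n,
      cnt D (u j) + cnt E (u j) = ((j : ℕ) : ℤ) + 1 := by
    intro j; rw [← cnt_union_disjoint hDE, ← hU, hUcnt]
  have hDbd : ∀ t, cnt E t ≤ cnt D t ∧ cnt D t ≤ cnt E t + 1 := by
    intro t
    have h1 := cnt_sdiff_sub A B t
    have h2 := hd t
    rw [← hD, ← hE] at h1
    omega
  have hDval : ∀ j : Fin n, cnt D (u j) = (((j : ℕ) / 2 : ℕ) : ℤ) + 1 := by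
    intro j
    have h1 := hsplit j
    have h2 := hDbd (u j)
    omega
  -- now the membership claim
  rcases Nat.eq_zero_or_eq_succ_pred (j : ℕ) with h0 | hsucc
  · -- j = 0 : show u j ∈ D, and Even 0
    have h1 : cnt D (u j) = 1 := by rw [hDval j, h0]; rfl
    have hne : (D ∩ Finset.Iic (u j)).Nonempty := by
      rw [← Finset.card_pos]
      have : ((D ∩ Finset.Iic (u j)).card : ℤ) = 1 := h1
      omega
    obtain ⟨a, ha⟩ := hne
    simp only [Finset.mem_inter, Finset.mem_Iic] at ha
    obtain ⟨i, rfl⟩ := husurj a (Finset.mem_union_left _ ha.1)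
    have : i ≤ j := u.le_iff_le.mp ha.2
    have hij : i = j := by
      apply Fin.ext; omega
    have hi0 : (i : ℕ) = 0 := by rw [hij]; exact h0
    rw [← hij]
    exact iff_of_true ha.1 (by simp [hi0])
  · -- j = m + 1
    set m := (j : ℕ) - 1 with hm
    have hmn : m < n := lt_trans (by omega) j.isLt
    set j' : Fin n := ⟨m, hmn⟩ with hj'
    have hjj' : (j' : ℕ) < (j : ℕ) := by simp [hj']; omega
    have hlt : u j' < u j := u.strictMono (by exact hjj')
    have hstep : ∀ a ∈ D, a ≤ u j → a ≠ u j → a ≤ u j' := by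
      intro a ha hle hne
      obtain ⟨i, rfl⟩ := husurj a (Finset.mem_union_left _ ha)
      have hij : i ≤ j := u.le_iff_le.mp hle
      have : i ≠ j := fun h => hne (by rw [h])
      have : (i : ℕ) ≤ m := by
        have := Fin.val_ne_of_ne this
        omega
      exact u.le_iff_le.mpr (by exact this)
    by_cases hjD : u j ∈ D
    · -- count increases by 1
      have he : D ∩ Finset.Iic (u j) = insert (u j) (D ∩ Finset.Iic (u j')) := by
        ext a
        simp only [Finset.mem_inter, Finset.mem_Iic, Finset.mem_insert]
        constructor
        · rintro ⟨ha, hle⟩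
          by_cases hne : a = u j
          · exact Or.inl hne
          · exact Or.inr ⟨ha, hstep a ha hle hne⟩
        · rintro (rfl | ⟨ha, hle⟩)
          · exact ⟨hjD, le_refl _⟩
          · exact ⟨ha, le_trans hle (le_of_lt hlt)⟩
      have hnotin : u j ∉ D ∩ Finset.Iic (u j') := by
        simp only [Finset.mem_inter, Finset.mem_Iic]
        rintro ⟨-, hle⟩; omega
      have hcc : cnt D (u j) = cnt D (u j') + 1 := by
        simp only [cnt, he, Finset.card_insert_of_notMem hnotin]
        push_cast; ring
      have e1 := hDval j
      have e2 := hDval j'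
      have : Even (j : ℕ) := by
        rw [Nat.even_iff]
        have hj'm : (j' : ℕ) = m := rfl
        rw [hj'm] at e2
        omega
      exact iff_of_true hjD this
    · have he : D ∩ Finset.Iic (u j) = D ∩ Finset.Iic (u j') := by
        ext a
        simp only [Finset.mem_inter, Finset.mem_Iic]
        constructor
        · rintro ⟨ha, hle⟩
          refine ⟨ha, hstep a ha hle ?_⟩
          rintro rfl; exact hjD ha
        · rintro ⟨ha, hle⟩
          exact ⟨ha, le_trans hle (le_of_lt hlt)⟩
      have hcc : cnt D (u j) = cnt D (u j') := by simp only [cnt, he]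
      have e1 := hDval j
      have e2 := hDval j'
      have : ¬ Even (j : ℕ) := by
        rw [Nat.even_iff]
        have hj'm : (j' : ℕ) = m := rfl
        rw [hj'm] at e2
        omega
      exact iff_of_false hjD this

lemma sum_sdiff_cancel {Y : Type*} [AddCommGroup Y] (y : ℕ → Y) (A B : Finset ℕ) :
    (∑ a ∈ A, y a) - (∑ a ∈ B, y a)
      = (∑ a ∈ A \ B, y a) - (∑ a ∈ B \ A, y a) := by
  have h1 : (∑ a ∈ A, y a) = (∑ a ∈ A \ B, y a) + (∑ a ∈ A ∩ B, y a) := by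
    rw [← Finset.sum_union (Finset.disjoint_sdiff_inter A B), Finset.sdiff_union_inter]
  have h2 : (∑ a ∈ B, y a) = (∑ a ∈ B \ A, y a) + (∑ a ∈ B ∩ A, y a) := by
    rw [← Finset.sum_union (Finset.disjoint_sdiff_inter B A), Finset.sdiff_union_inter]
  rw [h1, h2, Finset.inter_comm B A]
  abel

lemma alt_sum_repr {Y : Type*} [AddCommGroup Y] [Module ℝ Y] (y : ℕ → Y)
    {A B : Finset ℕ} {n : ℕ} (hn : (A \ B ∪ B \ A).card = n)
    (hd : ∀ t, cnt B t ≤ cnt A t ∧ cnt A t ≤ cnt B t + 1) :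
    (∑ a ∈ A, y a) - (∑ a ∈ B, y a)
      = ∑ j : Fin n, (-1 : ℝ) ^ (j : ℕ) • y ((A \ B ∪ B \ A).orderEmbOfFin hn j) := by
  classical
  set D := A \ B with hD
  set E := B \ A with hE
  set u := (A \ B ∪ B \ A).orderEmbOfFin hn with hu
  have hDE : Disjoint D E := disjoint_sdiff_sdiff
  have hmemD : ∀ j : Fin n, u j ∈ D ↔ Even (j : ℕ) := fun j => alt_mem hn hd j
  have humem : ∀ i : Fin n, u i ∈ D ∪ E := fun i => Finset.orderEmbOfFin_mem _ hn i
  have husurj : ∀ a ∈ D ∪ E, ∃ i : Fin n, u i = a := by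
    intro a ha
    have : a ∈ Set.range u := by rw [hu, Finset.range_orderEmbOfFin]; exact ha
    exact this
  rw [sum_sdiff_cancel]
  rw [← Finset.sum_filter_add_sum_filter_not Finset.univ (fun j : Fin n => Even (j : ℕ))]
  have hEv : ∑ j ∈ Finset.univ.filter (fun j : Fin n => Even (j : ℕ)),
      (-1 : ℝ) ^ (j : ℕ) • y (u j) = ∑ a ∈ D, y a := by
    rw [Finset.sum_congr rfl (g := fun j => y (u j)) ?_]
    · apply Finset.sum_bij (fun j _ => u j)
      · intro j hj
        simp only [Finset.mem_filter, Finset.mem_univ, true_and] at hj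
        exact (hmemD j).mpr hj
      · intro i _ j _ hij
        exact u.injective hij
      · intro a ha
        obtain ⟨i, rfl⟩ := husurj a (Finset.mem_union_left _ ha)
        refine ⟨i, ?_, rfl⟩
        simp only [Finset.mem_filter, Finset.mem_univ, true_and]
        exact (hmemD i).mp ha
      · intro j _; rfl
    · intro j hj
      simp only [Finset.mem_filter, Finset.mem_univ, true_and] at hj
      rw [hj.neg_one_pow, one_smul]
  have hOd : ∑ j ∈ Finset.univ.filter (fun j : Fin n => ¬ Even (j : ℕ)),
      (-1 : ℝ) ^ (j : ℕ) • y (u j) = -∑ a ∈ E, y a := by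
    rw [← Finset.sum_neg_distrib]
    rw [Finset.sum_congr rfl (g := fun j => -y (u j)) ?_]
    · apply Finset.sum_bij (fun j _ => u j)
      · intro j hj
        simp only [Finset.mem_filter, Finset.mem_univ, true_and] at hj
        have := humem j
        rcases Finset.mem_union.mp this with h | h
        · exact absurd ((hmemD j).mp h) hj
        · exact h
      · intro i _ j _ hij
        exact u.injective hij
      · intro a ha
        obtain ⟨i, rfl⟩ := husurj a (Finset.mem_union_right _ ha)
        refine ⟨i, ?_, rfl⟩
        simp only [Finset.mem_filter, Finset.mem_univ, true_and]
        intro hev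
        exact hDE.forall_ne_finset ((hmemD i).mpr hev) ha rfl
      · intro j _; rfl
    · intro j hj
      simp only [Finset.mem_filter, Finset.mem_univ, true_and] at hj
      rw [(Nat.odd_iff.mpr (Nat.not_even_iff.mp hj)).neg_one_pow]
      simp
  rw [hEv, hOd]
  abel

/-- Representation of the difference of sums over two sets at `dK`-distance ≤ 1 as an
alternating sum over a strictly increasing tuple. -/
lemma sum_sdiff_repr {Y : Type*} [NormedAddCommGroup Y] [NormedSpace ℝ Y] (y : ℕ → Y)
    {A B : Finset ℕ} (hK : dK A B ≤ 1) :
    ∃ (r : ℕ) (v : Fin r → ℕ), r ≤ A.card + B.card ∧ StrictMono v ∧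
      ‖(∑ a ∈ A, y a) - (∑ a ∈ B, y a)‖ = ‖∑ j : Fin r, (-1 : ℝ) ^ (j : ℕ) • y (v j)‖ := by
  have hcardbd : ∀ A' B' : Finset ℕ, (A' \ B' ∪ B' \ A').card ≤ A'.card + B'.card := by
    intro A' B'
    refine le_trans (Finset.card_union_le _ _) ?_
    exact add_le_add (Finset.card_le_card (Finset.sdiff_subset))
      (Finset.card_le_card (Finset.sdiff_subset))
  rcases cnt_wlog hK with hw | hw
  · refine ⟨(A \ B ∪ B \ A).card, fun j => (A \ B ∪ B \ A).orderEmbOfFin rfl j,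
      hcardbd A B, ((A \ B ∪ B \ A).orderEmbOfFin rfl).strictMono, ?_⟩
    congr 1
    apply alt_sum_repr
    intro t
    have h1 := cnt_diff_le hK t
    have h2 := hw t
    omega
  · have hK' : dK B A ≤ 1 := by
      have : dK B A = dK A B := by
        unfold dK
        congr 1
        ext d
        constructor
        · rintro ⟨a, b, rfl⟩; exact ⟨a, b, by omega⟩
        · rintro ⟨a, b, rfl⟩; exact ⟨a, b, by omega⟩
      omega
    refine ⟨(B \ A ∪ A \ B).card, fun j => (B \ A ∪ A \ B).orderEmbOfFin rfl j,
      le_trans (hcardbd B A) (by omega), ((B \ A ∪ A \ B).orderEmbOfFin rfl).strictMono, ?_⟩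
    rw [norm_sub_rev]
    congr 1
    apply alt_sum_repr
    intro t
    have h1 := cnt_diff_le hK' t
    have h2 := hw t
    omega

/-- Property `𝒬_q` with constant `C`: for every `k` and every Lipschitz map
`f : ([ℕ]^k, d_K) → X` (with `L` any bound for `ω_f(1)`), there is an infinite `M ⊆ ℕ`
such that `‖f(n̄) - f(m̄)‖ ≤ C · L · k^{1/q}` for all `n̄, m̄ ∈ [M]^k`. -/
def HasPropQ (X : Type*) [NormedAddCommGroup X] (q C : ℝ) : Prop :=
  ∀ (k : ℕ) (f : Finset ℕ → X) (L : ℝ), 0 ≤ L →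
    (∀ n m : Finset ℕ, n.card = k → m.card = k → (dK n m : ℝ) ≤ 1 → ‖f n - f m‖ ≤ L) →
    ∃ M : Set ℕ, M.Infinite ∧ ∀ n m : Finset ℕ, ↑n ⊆ M → ↑m ⊆ M →
      n.card = k → m.card = k → ‖f n - f m‖ ≤ C * L * (k : ℝ) ^ (1 / q)

/-- The `p`-alternating Banach–Saks property with constant `C`. -/
def HasAltBS (X : Type*) [NormedAddCommGroup X] [NormedSpace ℝ X] (p C : ℝ) : Prop :=
  ∀ x : ℕ → X, (∀ n, ‖x n‖ ≤ 1) → ∀ k : ℕ, ∃ M : Set ℕ, M.Infinite ∧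
    ∀ n : Fin k → ℕ, StrictMono n → (∀ j, n j ∈ M) →
      ‖∑ j : Fin k, (-1 : ℝ) ^ (j : ℕ) • x (n j)‖ ≤ C * (k : ℝ) ^ (1 / p)

lemma altBS_uniform {X : Type*} [NormedAddCommGroup X] [NormedSpace ℝ X] {p C : ℝ}
    (h : HasAltBS X p C) (hC : 0 ≤ C) (hp : 0 < p)
    (x : ℕ → X) (hx : ∀ n, ‖x n‖ ≤ 1) (K : ℕ) :
    ∃ M : Set ℕ, M.Infinite ∧ ∀ r, r ≤ K → ∀ n : Fin r → ℕ, StrictMono n →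
      (∀ j, n j ∈ M) → ‖∑ j : Fin r, (-1 : ℝ) ^ (j : ℕ) • x (n j)‖ ≤ C * (K : ℝ) ^ (1/p) := by
  induction K with
  | zero =>
    refine ⟨Set.univ, Set.infinite_univ, ?_⟩
    intro r hr n _ _
    have : r = 0 := Nat.le_zero.mp hr
    subst this
    simp only [Finset.univ_eq_empty, Finset.sum_empty, norm_zero, Nat.cast_zero]
    positivity
  | succ K ih =>
    obtain ⟨M', hM'inf, hM'⟩ := ih
    have hM'inf' : {i : ℕ | i ∈ M'}.Infinite := by rwa [Set.setOf_mem_eq]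
    set e := Nat.nth (· ∈ M') with he
    have hemono : StrictMono e := Nat.nth_strictMono hM'inf'
    have hemem : ∀ i, e i ∈ M' := fun i => Nat.nth_mem_of_infinite hM'inf' i
    obtain ⟨M'', hM''inf, hbd⟩ := h (fun i => x (e i)) (fun i => hx _) (K+1)
    refine ⟨e '' M'', hM''inf.image (hemono.injective.injOn), ?_⟩
    intro r hr n hmono hmem
    by_cases hrK : r ≤ K
    · have hsub : ∀ j, n j ∈ M' := by
        intro j
        obtain ⟨i, _, hi⟩ := hmem j
        rw [← hi]; exact hemem i
      refine le_trans (hM' r hrK n hmono hsub) ?_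
      have : (K : ℝ) ^ ((1:ℝ)/p) ≤ ((K:ℝ)+1) ^ ((1:ℝ)/p) :=
        Real.rpow_le_rpow (by positivity) (by linarith) (by positivity)
      calc C * (K : ℝ) ^ ((1:ℝ)/p) ≤ C * ((K:ℝ)+1) ^ ((1:ℝ)/p) := by nlinarith
        _ = C * ((K+1 : ℕ) : ℝ) ^ ((1:ℝ)/p) := by push_cast; ring_nf
    · have hreq : r = K + 1 := by omega
      subst hreq
      have hch : ∀ j : Fin (K+1), ∃ i, i ∈ M'' ∧ e i = n j := by
        intro j; obtain ⟨i, hi, hei⟩ := hmem j; exact ⟨i, hi, hei⟩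
      choose m hm hme using hch
      have hmmono : StrictMono m := by
        intro i j hij
        have : e (m i) < e (m j) := by rw [hme i, hme j]; exact hmono hij
        exact hemono.lt_iff_lt.mp this
      have := hbd m hmmono hm
      simp only [hme] at this
      exact this

section James

variable {X : Type*} [NormedAddCommGroup X] [NormedSpace ℝ X]

lemma annihilator_eval {n : ℕ} (v : Fin n → X) (H : (X →L[ℝ] ℝ) →L[ℝ] ℝ)
    (hH : ∀ f : X →L[ℝ] ℝ, (∀ i, f (v i) = 0) → H f = 0) :
    ∃ y : X, ∀ f : X →L[ℝ] ℝ, H f = f y := by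
  classical
  set Y : Submodule ℝ X := Submodule.span ℝ (Set.range v) with hY
  haveI : FiniteDimensional ℝ Y := FiniteDimensional.span_of_finite ℝ (Set.finite_range v)
  let S : (X →L[ℝ] ℝ) →ₗ[ℝ] Module.Dual ℝ Y :=
    { toFun := fun f => f.toLinearMap.domRestrict Y
      map_add' := by intro f g; ext z; simp
      map_smul' := by intro c f; ext z; simp }
  have hSapply : ∀ (f : X →L[ℝ] ℝ) (z : Y), S f z = f z := fun f z => rfl
  have hsurj : Function.Surjective S := by
    intro g
    let g' : Y →L[ℝ] ℝ := LinearMap.toContinuousLinearMap g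
    obtain ⟨G, hGext, -⟩ := exists_extension_norm_eq Y g'
    refine ⟨G, ?_⟩
    ext z
    rw [hSapply]
    exact (hGext z).trans rfl
  have hker : LinearMap.ker S ≤ LinearMap.ker (H.toLinearMap) := by
    intro f hf
    rw [LinearMap.mem_ker] at hf ⊢
    apply hH
    intro i
    have hvi : v i ∈ Y := Submodule.subset_span (Set.mem_range_self i)
    have := congrArg (fun (g : Module.Dual ℝ Y) => g ⟨v i, hvi⟩) hf
    simpa [hSapply] using this
  let equiv := S.quotKerEquivOfSurjective hsurj
  let h : Module.Dual ℝ (Module.Dual ℝ Y) :=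
    ((LinearMap.ker S).liftQ H.toLinearMap hker).comp equiv.symm.toLinearMap
  let y₀ : Y := (Module.evalEquiv ℝ Y).symm h
  refine ⟨(y₀ : X), ?_⟩
  intro f
  have h1 : equiv (Submodule.Quotient.mk f) = S f := rfl
  have h2 : equiv.symm (S f) = Submodule.Quotient.mk f := by
    rw [← h1, LinearEquiv.symm_apply_apply]
  have h3 : h (S f) = H f := by
    simp only [h, LinearMap.comp_apply, LinearEquiv.coe_toLinearMap, h2]
    exact Submodule.liftQ_apply _ _ _
  have h4 : (S f) y₀ = h (S f) := Module.apply_evalEquiv_symm_apply ℝ Y (S f) h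
  rw [← h3, ← h4, hSapply]

set_option synthInstance.maxHeartbeats 1000000 in
set_option maxHeartbeats 1000000 in
lemma exists_functional (F : (X →L[ℝ] ℝ) →L[ℝ] ℝ) {θ : ℝ} (hθpos : 0 < θ)
    {n : ℕ} (v : Fin n → X)
    (hd : ∀ y : X, θ < ‖F - NormedSpace.inclusionInDoubleDual ℝ X y‖) :
    ∃ f : X →L[ℝ] ℝ, ‖f‖ ≤ 1 ∧ θ < F f ∧ ∀ i, f (v i) = 0 := by
  classical
  by_contra hcon
  push_neg at hcon
  have key : ∀ g : X →L[ℝ] ℝ, ‖g‖ ≤ 1 → (∀ i, g (v i) = 0) → F g ≤ θ := by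
    intro g h1 h2
    by_contra hgt
    obtain ⟨i, hi⟩ := hcon g h1 (not_le.mp hgt)
    exact hi (h2 i)
  have key2 : ∀ g : X →L[ℝ] ℝ, ‖g‖ ≤ 1 → (∀ i, g (v i) = 0) → |F g| ≤ θ := by
    intro g h1 h2
    rw [abs_le]
    refine ⟨?_, key g h1 h2⟩
    have := key (-g) (by rwa [norm_neg]) (by intro i; simp [h2 i])
    rw [map_neg] at this
    linarith
  have hsmall : ∀ f : X →L[ℝ] ℝ, (∀ i, f (v i) = 0) → |F f| ≤ θ * ‖f‖ := by
    intro f hf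
    rcases eq_or_ne f 0 with rfl | hne
    · simp
    · have hpos : 0 < ‖f‖ := norm_pos_iff.mpr hne
      have hg : |F (‖f‖⁻¹ • f)| ≤ θ := by
        apply key2
        · have hns := norm_smul (‖f‖⁻¹) f
          rw [hns, Real.norm_eq_abs, abs_of_nonneg (inv_nonneg.mpr hpos.le),
            inv_mul_cancel₀ hpos.ne']
        · intro i; rw [ContinuousLinearMap.smul_apply, hf i, smul_zero]
      rw [map_smul, smul_eq_mul, abs_mul, abs_of_nonneg (inv_nonneg.mpr hpos.le)] at hg
      have h2 := mul_le_mul_of_nonneg_left hg hpos.le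
      rw [← mul_assoc, mul_inv_cancel₀ hpos.ne', one_mul] at h2
      linarith
  -- the annihilator subspace
  let Z : Submodule ℝ (X →L[ℝ] ℝ) :=
    { carrier := {f | ∀ i, f (v i) = 0}
      add_mem' := by intro f g hf hg i; simp [hf i, hg i]
      zero_mem' := fun i => rfl
      smul_mem' := by intro c f hf i; simp [hf i] }
  let FZ : Z →L[ℝ] ℝ := F.comp (Z.subtypeL)
  letI : Norm (Z →L[ℝ] ℝ) := @ContinuousLinearMap.hasOpNorm ℝ ℝ Z ℝ _ _ _ _ _ _ (RingHom.id ℝ)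
  have hFZ : ‖FZ‖ ≤ θ := by
    apply ContinuousLinearMap.opNorm_le_bound _ hθpos.le
    intro f
    have := hsmall (f : X →L[ℝ] ℝ) f.2
    simpa [FZ, Real.norm_eq_abs] using this
  obtain ⟨G, hGext, hGnorm⟩ := exists_extension_norm_eq Z FZ
  have hHzero : ∀ f : X →L[ℝ] ℝ, (∀ i, f (v i) = 0) → (F - G) f = 0 := by
    intro f hf
    have hfZ : f ∈ Z := hf
    have := hGext ⟨f, hfZ⟩
    simp only [ContinuousLinearMap.sub_apply]
    rw [this]
    simp [FZ]
  obtain ⟨y, hy⟩ := annihilator_eval v (F - G) hHzero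
  have heq : F - NormedSpace.inclusionInDoubleDual ℝ X y = G := by
    ext f
    have := hy f
    simp only [ContinuousLinearMap.sub_apply] at this ⊢
    simp only [NormedSpace.dual_def]
    linarith
  have := hd y
  rw [heq, hGnorm] at this
  linarith [hFZ]

lemma exists_vector (F : (X →L[ℝ] ℝ) →L[ℝ] ℝ) {n : ℕ} (g : Fin n → (X →L[ℝ] ℝ))
    {ε : ℝ} (hε : 0 < ε) :
    ∃ x : X, ‖x‖ ≤ ‖F‖ + ε ∧ ∀ i, |g i x - F (g i)| ≤ ε := by
  classical
  set R : ℝ := ‖F‖ + ε with hR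
  have hRpos : 0 < R := by positivity
  let T : X →L[ℝ] (Fin n → ℝ) := ContinuousLinearMap.pi (fun i => g i)
  set s : Set (Fin n → ℝ) := closure (T '' Metric.closedBall 0 R) with hs
  have hsconv : Convex ℝ s := ((convex_closedBall (0 : X) R).linear_image
    (T : X →ₗ[ℝ] (Fin n → ℝ))).closure
  have hsclosed : IsClosed s := isClosed_closure
  set w : Fin n → ℝ := fun i => F (g i) with hw
  have hwmem : w ∈ s := by
    by_contra hwns
    obtain ⟨φ, u, hlt, hgt⟩ := geometric_hahn_banach_closed_point hsconv hsclosed hwns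
    have hu0 : 0 < u := by
      have h0s : (0 : Fin n → ℝ) ∈ s := by
        apply subset_closure
        exact ⟨0, Metric.mem_closedBall_self hRpos.le, map_zero T⟩
      have := hlt 0 h0s
      simpa using this
    set a : Fin n → ℝ := fun i => φ (Pi.single i 1) with ha
    have hφ : ∀ z : Fin n → ℝ, φ z = ∑ i, z i * a i := by
      intro z
      conv_lhs => rw [pi_eq_sum_univ z]
      rw [map_sum]
      congr 1
      ext i
      rw [map_smul, smul_eq_mul]
      congr 1
      · congr 1
        ext j
        simp [Pi.single_apply, eq_comm]
    set G : X →L[ℝ] ℝ := ∑ i, a i • g i with hG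
    have hGx : ∀ x : X, G x = φ (T x) := by
      intro x
      rw [hφ (T x), hG]
      simp only [ContinuousLinearMap.sum_apply, ContinuousLinearMap.smul_apply, smul_eq_mul]
      apply Finset.sum_congr rfl
      intro i _
      have : T x i = g i x := rfl
      rw [this]; ring
    have hball : ∀ x : X, ‖x‖ ≤ R → G x < u := by
      intro x hx
      rw [hGx]
      apply hlt
      exact subset_closure ⟨x, by simpa [Metric.mem_closedBall] using hx, rfl⟩
    have hGnorm : ‖G‖ ≤ u / R := by
      apply ContinuousLinearMap.opNorm_le_bound _ (by positivity)
      intro x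
      rcases eq_or_ne x 0 with rfl | hxne
      · simp
      · have hxpos : 0 < ‖x‖ := norm_pos_iff.mpr hxne
        set z : X := (R / ‖x‖) • x with hz
        have hznorm : ‖z‖ = R := by
          have hns := norm_smul (R / ‖x‖) x
          rw [hz, hns, Real.norm_eq_abs, abs_of_nonneg (by positivity)]
          field_simp
        have h1 : G z < u := hball z hznorm.le
        have h2 : G (-z) < u := hball (-z) (by rw [norm_neg]; exact hznorm.le)
        rw [map_neg] at h2
        have habs : |G z| ≤ u := abs_le.mpr ⟨by linarith, h1.le⟩
        have hGz : G z = (R / ‖x‖) * G x := by rw [hz, map_smul, smul_eq_mul]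
        rw [hGz, abs_mul, abs_of_nonneg (by positivity : (0:ℝ) ≤ R / ‖x‖)] at habs
        rw [Real.norm_eq_abs]
        have hfrac : 0 < R / ‖x‖ := by positivity
        calc |G x| = (R / ‖x‖ * |G x|) * (‖x‖ / R) := by field_simp
          _ ≤ u * (‖x‖ / R) := by
              apply mul_le_mul_of_nonneg_right habs (by positivity)
          _ = u / R * ‖x‖ := by ring
    have hFG : F G = φ w := by
      rw [hG, map_sum, hφ w]
      apply Finset.sum_congr rfl
      intro i _
      rw [map_smul, smul_eq_mul]
      ring
    have hFGle : F G ≤ ‖F‖ * (u / R) :=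
      le_trans (le_abs_self _) (by
        calc |F G| ≤ ‖F‖ * ‖G‖ := F.le_opNorm G
          _ ≤ ‖F‖ * (u / R) := by
              apply mul_le_mul_of_nonneg_left hGnorm (norm_nonneg F))
    have hlt2 : ‖F‖ * (u / R) < u := by
      rw [div_eq_inv_mul, ← mul_assoc]
      have h1 : ‖F‖ * R⁻¹ < 1 := by
        rw [mul_inv_lt_iff₀ hRpos, one_mul, hR]
        linarith
      nlinarith
    rw [hFG] at hFGle
    linarith
  rw [Metric.mem_closure_iff] at hwmem
  obtain ⟨b, hb, hdist⟩ := hwmem (ε) hε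
  obtain ⟨x, hx, rfl⟩ := hb
  refine ⟨x, by simpa [Metric.mem_closedBall] using hx, ?_⟩
  intro i
  have := dist_le_pi_dist w (T x) i
  have h2 : dist (w i) (T x i) ≤ dist w (T x) := this
  rw [Real.dist_eq] at h2
  have : T x i = g i x := rfl
  rw [this] at h2
  rw [abs_sub_comm]
  calc |w i - g i x| ≤ dist w (T x) := h2
    _ ≤ ε := hdist.le

/-- James-type sequences in a nonreflexive space. -/
lemma james_sequences (F : (X →L[ℝ] ℝ) →L[ℝ] ℝ) {θ : ℝ} (hθpos : 0 < θ) (hθ1 : θ ≤ 1)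
    (hF1 : ‖F‖ ≤ 1)
    (hd : ∀ y : X, θ < ‖F - NormedSpace.inclusionInDoubleDual ℝ X y‖) :
    ∃ (x : ℕ → X) (f : ℕ → (X →L[ℝ] ℝ)), (∀ m, ‖x m‖ ≤ 1) ∧ (∀ m, ‖f m‖ ≤ 1) ∧
      (∀ i j, i ≤ j → θ/2 ≤ f i (x j)) ∧ (∀ i j, j < i → f i (x j) = 0) := by
  classical
  set P := X × (X →L[ℝ] ℝ) with hP
  let Good : ∀ {m : ℕ}, (Fin m → P) → Prop := fun {m} g =>
    (∀ i, ‖(g i).1‖ ≤ 1) ∧ (∀ i, ‖(g i).2‖ ≤ 1) ∧ (∀ i, θ < F ((g i).2)) ∧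
    (∀ i j : Fin m, i ≤ j → θ/2 ≤ (g i).2 ((g j).1)) ∧
    (∀ i j : Fin m, j < i → (g i).2 ((g j).1) = 0)
  have hstep : ∀ (m : ℕ) (g : Fin m → P), Good g → ∃ z : P, Good (Fin.snoc g z) := by
    intro m g hg
    obtain ⟨hx1, hf1, hFf, hlow, hzero⟩ := hg
    obtain ⟨f, hfnorm, hFf', hfann⟩ :=
      exists_functional F hθpos (fun i : Fin m => (g i).1) hd
    have hε : (0:ℝ) < θ/4 := by linarith
    set fs : Fin (m+1) → (X →L[ℝ] ℝ) := Fin.snoc (fun i : Fin m => (g i).2) f with hfs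
    obtain ⟨x', hx'norm, hx'⟩ := exists_vector F fs hε
    have hx'bd : ‖x'‖ ≤ 1 + θ/4 := le_trans hx'norm (by linarith)
    set c : ℝ := (1 + θ/4)⁻¹ with hc
    have hcpos : 0 < c := by rw [hc]; positivity
    set x : X := c • x' with hx
    have hxnorm : ‖x‖ ≤ 1 := by
      have hns := norm_smul c x'
      rw [hx, hns, Real.norm_eq_abs, abs_of_nonneg hcpos.le, hc]
      rw [inv_mul_le_iff₀ (by linarith : (0:ℝ) < 1 + θ/4)]
      linarith
    have hFfs : ∀ i : Fin (m+1), θ < F (fs i) := by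
      intro i
      induction i using Fin.lastCases with
      | last => rw [hfs]; simpa [Fin.snoc_last] using hFf'
      | cast i' => rw [hfs]; simpa [Fin.snoc_castSucc] using hFf i'
    have hfsnorm : ∀ i : Fin (m+1), ‖fs i‖ ≤ 1 := by
      intro i
      induction i using Fin.lastCases with
      | last => rw [hfs]; simpa [Fin.snoc_last] using hfnorm
      | cast i' => rw [hfs]; simpa [Fin.snoc_castSucc] using hf1 i'
    have hval : ∀ i : Fin (m+1), θ/2 ≤ fs i x := by
      intro i
      have happ := hx' i
      have h1 : θ - θ/4 ≤ fs i x' := by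
        have h2 := (abs_le.mp happ).1
        have h3 := hFfs i
        linarith
      have h2 : fs i x = c * fs i x' := by rw [hx, map_smul, smul_eq_mul]
      rw [h2, hc, ← div_eq_inv_mul, le_div_iff₀ (by linarith : (0:ℝ) < 1 + θ/4)]
      nlinarith
    refine ⟨(x, f), ?_, ?_, ?_, ?_, ?_⟩
    · intro i
      induction i using Fin.lastCases with
      | last => simpa [Fin.snoc_last] using hxnorm
      | cast i' => simpa [Fin.snoc_castSucc] using hx1 i'
    · intro i
      induction i using Fin.lastCases with
      | last => simpa [Fin.snoc_last] using hfnorm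
      | cast i' => simpa [Fin.snoc_castSucc] using hf1 i'
    · intro i
      induction i using Fin.lastCases with
      | last => simpa [Fin.snoc_last] using hFf'
      | cast i' => simpa [Fin.snoc_castSucc] using hFf i'
    · intro i j hij
      have hsnd : ∀ i : Fin (m+1), ((Fin.snoc g (x, f) : Fin (m+1) → P) i).2 = fs i := by
        intro i
        induction i using Fin.lastCases with
        | last => simp [Fin.snoc_last, hfs]
        | cast i' => simp [Fin.snoc_castSucc, hfs]
      induction j using Fin.lastCases with
      | last =>
        rw [hsnd i]
        simpa [Fin.snoc_last] using hval i
      | cast j' =>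
        have hilt : i < Fin.last m := lt_of_le_of_lt hij (Fin.castSucc_lt_last j')
        obtain ⟨i', rfl⟩ := Fin.exists_castSucc_eq.mpr (Fin.ne_last_of_lt hilt)
        have : i' ≤ j' := by
          have := hij
          rwa [Fin.castSucc_le_castSucc_iff] at this
        simpa [Fin.snoc_castSucc] using hlow i' j' this
    · intro i j hji
      induction i using Fin.lastCases with
      | last =>
        have hjlt : j < Fin.last m := hji
        obtain ⟨j', rfl⟩ := Fin.exists_castSucc_eq.mpr (Fin.ne_last_of_lt hjlt)
        simpa [Fin.snoc_last, Fin.snoc_castSucc] using hfann j'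
      | cast i' =>
        have hjlt : j < Fin.last m := lt_trans hji (Fin.castSucc_lt_last i')
        obtain ⟨j', rfl⟩ := Fin.exists_castSucc_eq.mpr (Fin.ne_last_of_lt hjlt)
        have : j' < i' := by rwa [Fin.castSucc_lt_castSucc_iff] at hji
        simpa [Fin.snoc_castSucc] using hzero i' j' this
  -- build the infinite sequence by recursion
  have hP0 : Good (fun i : Fin 0 => (Fin.elim0 i : P)) := by
    refine ⟨?_, ?_, ?_, ?_, ?_⟩ <;> intro i <;> exact i.elim0
  let zfun : ∀ (m : ℕ), (Fin m → P) → P := fun m g =>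
    if h : Good g then (hstep m g h).choose else ((0 : X), (0 : X →L[ℝ] ℝ))
  let pre : ∀ m : ℕ, Fin m → P := fun m =>
    Nat.rec (motive := fun m => Fin m → P) (fun i => i.elim0)
      (fun m g => Fin.snoc g (zfun m g)) m
  have hpre0 : pre 0 = (fun i => i.elim0) := rfl
  have hpreS : ∀ m, pre (m+1) = Fin.snoc (pre m) (zfun m (pre m)) := fun m => rfl
  have hGood : ∀ m, Good (pre m) := by
    intro m
    induction m with
    | zero =>
      refine ⟨?_, ?_, ?_, ?_, ?_⟩ <;> intro i <;> exact i.elim0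
    | succ m ih =>
      rw [hpreS m]
      have : zfun m (pre m) = (hstep m (pre m) ih).choose := dif_pos ih
      rw [this]
      exact (hstep m (pre m) ih).choose_spec
  have hcomp : ∀ m, ∀ i : Fin m, pre (m+1) (Fin.castSucc i) = pre m i := by
    intro m i
    rw [hpreS m, Fin.snoc_castSucc]
  have hstable : ∀ (m k : ℕ) (h : k < m), pre m ⟨k, h⟩ = pre (k+1) (Fin.last k) := by
    intro m
    induction m with
    | zero => intro k h; omega
    | succ m ih =>
      intro k h
      rcases Nat.lt_or_ge k m with hk | hk
      · have : (⟨k, h⟩ : Fin (m+1)) = Fin.castSucc ⟨k, hk⟩ := rfl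
        rw [this, hcomp m ⟨k, hk⟩, ih k hk]
      · have hkm : k = m := by omega
        subst hkm
        rfl
  set xs : ℕ → X := fun m => (pre (m+1) (Fin.last m)).1 with hxs
  set fseq : ℕ → (X →L[ℝ] ℝ) := fun m => (pre (m+1) (Fin.last m)).2 with hfseq
  refine ⟨xs, fseq, ?_, ?_, ?_, ?_⟩
  · intro m
    exact (hGood (m+1)).1 (Fin.last m)
  · intro m
    exact (hGood (m+1)).2.1 (Fin.last m)
  · intro i j hij
    have hG := hGood (j+1)
    have hi : i < j + 1 := by omega
    have h1 : pre (j+1) ⟨i, hi⟩ = pre (i+1) (Fin.last i) := hstable (j+1) i hi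
    have h2 := hG.2.2.2.1 ⟨i, hi⟩ (Fin.last j) (by
      show (⟨i, hi⟩ : Fin (j+1)) ≤ ⟨j, by omega⟩
      simp [Fin.le_def]; omega)
    rw [h1] at h2
    exact h2
  · intro i j hji
    have hG := hGood (i+1)
    have hj : j < i + 1 := by omega
    have h1 : pre (i+1) ⟨j, hj⟩ = pre (j+1) (Fin.last j) := hstable (i+1) j hj
    have h2 := hG.2.2.2.2 (Fin.last i) ⟨j, hj⟩ (by
      show (⟨j, hj⟩ : Fin (i+1)) < ⟨i, by omega⟩
      simp [Fin.lt_def]; omega)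
    rw [h1] at h2
    exact h2

end James

set_option maxHeartbeats 2000000 in
/-- Let `p, q ∈ (1,∞)` with `q > p/(p-1)`. A Banach space with the `p`-alternating
Banach–Saks property and property `𝒬_q` is reflexive (the canonical embedding into the
bidual is onto). -/
theorem reflexive_of_altBS_and_propQ
    (X : Type*) [NormedAddCommGroup X] [NormedSpace ℝ X] [CompleteSpace X]
    (p q : ℝ) (hp : 1 < p) (hq : 1 < q) (hpq : p / (p - 1) < q)
    (hBS : ∃ C, 0 < C ∧ HasAltBS X p C) (hQ : ∃ C, 1 ≤ C ∧ HasPropQ X q C) :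
    Function.Surjective (NormedSpace.inclusionInDoubleDual ℝ X) := by
  classical
  by_contra hns
  rw [Function.Surjective] at hns
  push_neg at hns
  obtain ⟨F₀, hF₀⟩ := hns
  set J := NormedSpace.inclusionInDoubleDual ℝ X with hJ
  have hclosed : IsClosed (Set.range J) := by
    have h1 : Isometry (NormedSpace.inclusionInDoubleDualLi ℝ (E := X)) :=
      (NormedSpace.inclusionInDoubleDualLi ℝ (E := X)).isometry
    exact h1.isClosedEmbedding.isClosed_range
  have hF₀ne : F₀ ∉ Set.range J := by rintro ⟨y, hy⟩; exact hF₀ y hy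
  have hrange_ne : (Set.range J).Nonempty := ⟨J 0, 0, rfl⟩
  have hdpos : 0 < Metric.infDist F₀ (Set.range J) :=
    (hclosed.notMem_iff_infDist_pos hrange_ne).mp hF₀ne
  set d := Metric.infDist F₀ (Set.range J) with hd
  have hdle : ∀ y : X, d ≤ ‖F₀ - J y‖ := by
    intro y
    have := Metric.infDist_le_dist_of_mem (x := F₀) (Set.mem_range_self (f := ⇑J) y)
    rwa [dist_eq_norm (E := StrongDual ℝ (StrongDual ℝ X))] at this
  have hF₀pos : 0 < ‖F₀‖ := by
    have h0 := hdle 0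
    rw [map_zero, sub_zero (G := StrongDual ℝ (StrongDual ℝ X))] at h0
    linarith
  set F : (X →L[ℝ] ℝ) →L[ℝ] ℝ := ‖F₀‖⁻¹ • F₀ with hF
  have hNSC := @NormedSpace.toNormSMulClass ℝ ((X →L[ℝ] ℝ) →L[ℝ] ℝ) _ _ _
  have hFnorm : ‖F‖ = 1 := by
    have hns2 := norm_smul (‖F₀‖⁻¹) F₀
    rw [hF, hns2, Real.norm_eq_abs, abs_of_nonneg (inv_nonneg.mpr hF₀pos.le),
      inv_mul_cancel₀ hF₀pos.ne']
  set θ : ℝ := (‖F₀‖⁻¹ * d) / 2 with hθ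
  have hθpos : 0 < θ := by rw [hθ]; positivity
  have hθd : ∀ y : X, θ < ‖F - J y‖ := by
    intro y
    have key : F - J y = ‖F₀‖⁻¹ • (F₀ - J (‖F₀‖ • y)) := by
      rw [smul_sub, hF, map_smul]
      congr 1
      rw [smul_smul, inv_mul_cancel₀ hF₀pos.ne', one_smul]
    rw [key]
    have hns2 := norm_smul (‖F₀‖⁻¹) (F₀ - J (‖F₀‖ • y))
    rw [hns2, Real.norm_eq_abs, abs_of_nonneg (inv_nonneg.mpr hF₀pos.le)]
    have h1 := hdle (‖F₀‖ • y)
    have h2 : ‖F₀‖⁻¹ * d ≤ ‖F₀‖⁻¹ * ‖F₀ - J (‖F₀‖ • y)‖ :=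
      mul_le_mul_of_nonneg_left h1 (inv_nonneg.mpr hF₀pos.le)
    rw [hθ]
    have h3 : 0 < ‖F₀‖⁻¹ * d := by positivity
    linarith
  have hθ1 : θ ≤ 1 := by
    have := hθd 0
    rw [map_zero, sub_zero (G := StrongDual ℝ (StrongDual ℝ X)), hFnorm] at this
    linarith
  obtain ⟨x, f, hx1, hf1, hlow, hzero⟩ := james_sequences F hθpos hθ1 hFnorm.le hθd
  obtain ⟨C₁, hC₁pos, hBS'⟩ := hBS
  obtain ⟨C₂, hC₂1, hQ'⟩ := hQ
  -- the main quantitative estimate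
  have main : ∀ k : ℕ, 1 ≤ k →
      θ/2 * k ≤ C₂ * (C₁ * (((2*k : ℕ)) : ℝ) ^ (1/p)) * (k : ℝ) ^ (1/q) := by
    intro k hk
    obtain ⟨M₀, hM₀inf, hM₀⟩ :=
      altBS_uniform hBS' hC₁pos.le (by linarith : (0:ℝ) < p) x hx1 (2*k)
    have hM₀inf' : {i : ℕ | i ∈ M₀}.Infinite := by rwa [Set.setOf_mem_eq]
    set e := Nat.nth (· ∈ M₀) with he
    have hemono : StrictMono e := Nat.nth_strictMono hM₀inf'
    have hemem : ∀ i, e i ∈ M₀ := fun i => Nat.nth_mem_of_infinite hM₀inf' i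
    set fmap : Finset ℕ → X := fun A => ∑ a ∈ A, x (e a) with hfmap
    set L : ℝ := C₁ * (((2*k : ℕ)) : ℝ) ^ (1/p) with hL
    have hLnn : 0 ≤ L := by
      rw [hL]; positivity
    have hLip : ∀ A B : Finset ℕ, A.card = k → B.card = k →
        ((dK A B : ℕ) : ℝ) ≤ 1 → ‖fmap A - fmap B‖ ≤ L := by
      intro A B hA hB hdk
      have hdk' : dK A B ≤ 1 := by exact_mod_cast hdk
      obtain ⟨r, v, hrle, hvmono, hnorm_eq⟩ := sum_sdiff_repr (fun a => x (e a)) hdk'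
      have hfe : fmap A - fmap B = (∑ a ∈ A, x (e a)) - (∑ a ∈ B, x (e a)) := rfl
      rw [hfe, hnorm_eq]
      have hcomp : (∑ j : Fin r, (-1:ℝ)^(j:ℕ) • (fun a => x (e a)) (v j))
          = ∑ j : Fin r, (-1:ℝ)^(j:ℕ) • x ((e ∘ v) j) := rfl
      rw [hcomp]
      apply hM₀ r (by omega) (e ∘ v) (hemono.comp hvmono)
      intro j
      exact hemem (v j)
    obtain ⟨M, hMinf, hMbound⟩ := hQ' k fmap L hLnn hLip
    have hMinf' : {i : ℕ | i ∈ M}.Infinite := by rwa [Set.setOf_mem_eq]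
    set c := Nat.nth (· ∈ M) with hc
    have hcmono : StrictMono c := Nat.nth_strictMono hMinf'
    have hcmem : ∀ i, c i ∈ M := fun i => Nat.nth_mem_of_infinite hMinf' i
    set A : Finset ℕ := (Finset.range k).image c with hA
    set B : Finset ℕ := (Finset.range k).image (fun i => c (k + i)) with hB
    have hAcard : A.card = k := by
      rw [hA, Finset.card_image_of_injective _ hcmono.injective, Finset.card_range]
    have hBcard : B.card = k := by
      rw [hB, Finset.card_image_of_injective _ (fun i j hij => by
        have := hcmono.injective hij; omega), Finset.card_range]
    have hAsub : ↑A ⊆ M := by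
      intro a ha
      simp only [hA, Finset.coe_image, Set.mem_image] at ha
      obtain ⟨i, _, rfl⟩ := ha
      exact hcmem i
    have hBsub : ↑B ⊆ M := by
      intro a ha
      simp only [hB, Finset.coe_image, Set.mem_image] at ha
      obtain ⟨i, _, rfl⟩ := ha
      exact hcmem (k + i)
    have upper := hMbound B A hBsub hAsub hBcard hAcard
    -- lower bound
    set N := e (c k) with hN
    have hfA : f N (fmap A) = 0 := by
      rw [hfmap]
      simp only
      rw [map_sum, hA, Finset.sum_image (fun i _ j _ hij => hcmono.injective hij)]
      apply Finset.sum_eq_zero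
      intro i hi
      apply hzero
      apply hemono
      exact hcmono (by simp at hi; omega)
    have hfB : (k : ℝ) * (θ/2) ≤ f N (fmap B) := by
      rw [hfmap]
      simp only
      rw [map_sum, hB, Finset.sum_image (fun i _ j _ hij => by
        have := hcmono.injective hij; omega)]
      have : (k : ℝ) * (θ/2) = ∑ _i ∈ Finset.range k, (θ/2) := by
        rw [Finset.sum_const, Finset.card_range, nsmul_eq_mul]
      rw [this]
      apply Finset.sum_le_sum
      intro i _
      apply hlow
      apply hemono.monotone
      exact hcmono.monotone (by omega)
    have hlower : (k : ℝ) * (θ/2) ≤ ‖fmap B - fmap A‖ := by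
      have h1 : f N (fmap B - fmap A) = f N (fmap B) - f N (fmap A) := map_sub _ _ _
      have h2 : f N (fmap B - fmap A) ≤ ‖fmap B - fmap A‖ := by
        refine le_trans (le_abs_self _) ?_
        rw [← Real.norm_eq_abs]
        refine le_trans ((f N).le_opNorm _) ?_
        have := hf1 N
        nlinarith [norm_nonneg (fmap B - fmap A)]
      rw [h1, hfA, sub_zero] at h2
      linarith [hfB]
    calc θ/2 * k = (k : ℝ) * (θ/2) := by ring
      _ ≤ ‖fmap B - fmap A‖ := hlower
      _ ≤ C₂ * L * (k : ℝ) ^ (1/q) := upper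
      _ = C₂ * (C₁ * (((2*k : ℕ)) : ℝ) ^ (1/p)) * (k : ℝ) ^ (1/q) := by rw [hL]
  -- derive the contradiction from growth rates
  have hp0 : 0 < p := by linarith
  have hq0 : 0 < q := by linarith
  have hα : 0 < 1 - 1/p - 1/q := by
    have h1 : 0 < p - 1 := by linarith
    have h2 : 0 < p / (p - 1) := by positivity
    have h3 : 1/q < 1/(p/(p-1)) := one_div_lt_one_div_of_lt h2 hpq
    have h4 : 1/(p/(p-1)) = (p-1)/p := one_div_div _ _
    rw [h4] at h3
    have h5 : (p-1)/p = 1 - 1/p := by field_simp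
    rw [h5] at h3
    linarith
  set α := 1 - 1/p - 1/q with hαdef
  set B₀ := C₂ * (C₁ * (2:ℝ)^((1:ℝ)/p)) with hB₀
  have hB₀pos : 0 < B₀ := by rw [hB₀]; positivity
  have hbound : ∀ k : ℕ, 1 ≤ k → θ/2 * (k:ℝ)^α ≤ B₀ := by
    intro k hk
    have hkpos : (0:ℝ) < (k:ℝ) := by exact_mod_cast hk
    have h1 := main k hk
    have h2 : (((2*k : ℕ)) : ℝ) ^ ((1:ℝ)/p) = (2:ℝ)^((1:ℝ)/p) * (k:ℝ)^((1:ℝ)/p) := by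
      push_cast
      rw [Real.mul_rpow (by norm_num) hkpos.le]
    rw [h2] at h1
    have h3 : (k : ℝ) = (k:ℝ)^α * ((k:ℝ)^((1:ℝ)/p) * (k:ℝ)^((1:ℝ)/q)) := by
      rw [← Real.rpow_add hkpos, ← Real.rpow_add hkpos]
      rw [hαdef]
      ring_nf
      rw [Real.rpow_one]
    have h4 : θ/2 * ((k:ℝ)^α * ((k:ℝ)^((1:ℝ)/p) * (k:ℝ)^((1:ℝ)/q)))
        ≤ B₀ * ((k:ℝ)^((1:ℝ)/p) * (k:ℝ)^((1:ℝ)/q)) := by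
      rw [← h3]
      calc θ/2 * (k:ℝ) ≤ C₂ * ((C₁ * ((2:ℝ)^((1:ℝ)/p) * (k:ℝ)^((1:ℝ)/p)))) * (k : ℝ) ^ ((1:ℝ)/q) := h1
        _ = B₀ * ((k:ℝ)^((1:ℝ)/p) * (k:ℝ)^((1:ℝ)/q)) := by rw [hB₀]; ring
    have h5 : 0 < (k:ℝ)^((1:ℝ)/p) * (k:ℝ)^((1:ℝ)/q) := by positivity
    have h6 : θ/2 * (k:ℝ)^α * ((k:ℝ)^((1:ℝ)/p) * (k:ℝ)^((1:ℝ)/q))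
        ≤ B₀ * ((k:ℝ)^((1:ℝ)/p) * (k:ℝ)^((1:ℝ)/q)) := by
      calc θ/2 * (k:ℝ)^α * ((k:ℝ)^((1:ℝ)/p) * (k:ℝ)^((1:ℝ)/q))
          = θ/2 * ((k:ℝ)^α * ((k:ℝ)^((1:ℝ)/p) * (k:ℝ)^((1:ℝ)/q))) := by ring
        _ ≤ B₀ * ((k:ℝ)^((1:ℝ)/p) * (k:ℝ)^((1:ℝ)/q)) := h4
    exact le_of_mul_le_mul_right h6 h5
  -- but k^α → ∞
  have htend : Tendsto (fun k : ℕ => (k:ℝ)^α) atTop atTop :=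
    (tendsto_rpow_atTop hα).comp tendsto_natCast_atTop_atTop
  have hev := (htend.eventually_gt_atTop (2 * B₀ / θ)).and (eventually_ge_atTop 1)
  obtain ⟨k, hk1, hk2⟩ := hev.exists
  have := hbound k hk2
  have h7 : (k:ℝ)^α ≤ 2 * B₀ / θ := by
    rw [le_div_iff₀ hθpos]
    nlinarith
  linarith
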